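/- Let ν ∈ ℝ with ν ≠ 0, let κ_ν be the smallest positive half-integer (element of ℕ + 1/2) with κ_ν² > ν² + 1/4, and define C^ν := 1 − (ν²·(κ_ν² + 1/4)/(κ_ν² − 1/4)²)·( √( 1 + (4κ_ν² − ν²)·(κ_ν² − 1/4)²/((κ_ν² + 1/4)²·ν²) ) − 1 ). Then C^ν > 0, and with b := 1 − C^ν, for every real κ with |κ| ≥ κ_ν and every s ∈ ℝ one has ν² + b/4 + κ²·b + s²·b − √( 4κ²ν² + 4ν²s² + κ²b² ) ≥ 0. -/

import Mathlib

set_option maxHeartbeats 800000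


/-- The constant `C^ν` of Lemma on higher angular momentum channels. -/
noncomputable def Cnu (ν κν : ℝ) : ℝ :=
  1 - ν ^ 2 * (κν ^ 2 + 1 / 4) / (κν ^ 2 - 1 / 4) ^ 2 *
    (Real.sqrt (1 + (4 * κν ^ 2 - ν ^ 2) * (κν ^ 2 - 1 / 4) ^ 2 /
        ((κν ^ 2 + 1 / 4) ^ 2 * ν ^ 2)) - 1)

/-- Let `ν ≠ 0` and let `κν` be the smallest positive half-integer with `κν² > ν² + 1/4`.
Then `C^ν > 0`, and with `b := 1 − C^ν`, for every real `κ` with `|κ| ≥ κν` and every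
`s ∈ ℝ` one has `ν² + b/4 + κ²b + s²b − √(4κ²ν² + 4ν²s² + κ²b²) ≥ 0`. -/
theorem higher_channel_inequality (ν : ℝ) (hν : ν ≠ 0) (κν : ℝ)
    (hκν_half : ∃ n : ℕ, κν = n + 1 / 2)
    (hκν_gt : κν ^ 2 > ν ^ 2 + 1 / 4)
    (hκν_min : ∀ κ : ℝ, (∃ n : ℕ, κ = n + 1 / 2) → κ ^ 2 > ν ^ 2 + 1 / 4 → κν ≤ κ) :
    0 < Cnu ν κν ∧
      ∀ κ s : ℝ, |κ| ≥ κν →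
        ν ^ 2 + (1 - Cnu ν κν) / 4 + κ ^ 2 * (1 - Cnu ν κν) + s ^ 2 * (1 - Cnu ν κν) -
            Real.sqrt (4 * κ ^ 2 * ν ^ 2 + 4 * ν ^ 2 * s ^ 2 +
              κ ^ 2 * (1 - Cnu ν κν) ^ 2) ≥ 0 := by
  clear hκν_min
  obtain ⟨n, hn⟩ := hκν_half
  have hκν_pos : (0:ℝ) < κν := by rw [hn]; positivity
  clear hn
  have hν2 : 0 < ν ^ 2 := by positivity
  set m : ℝ := κν ^ 2 with hm_def
  have hm : ν ^ 2 + 1 / 4 < m := hκν_gt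
  clear hκν_gt
  have hm1 : ν ^ 2 < m - 1 / 4 := by linarith
  have hm2 : (0:ℝ) < m - 1 / 4 := by linarith
  have hm3 : (0:ℝ) < m + 1 / 4 := by linarith
  have hm0 : (0:ℝ) < m := by linarith
  have h4m : (0:ℝ) < 4 * m - ν ^ 2 := by nlinarith
  set X : ℝ := 1 + (4 * m - ν ^ 2) * (m - 1 / 4) ^ 2 /
      ((m + 1 / 4) ^ 2 * ν ^ 2) with hX_def
  have hX1 : 1 < X := by
    rw [hX_def]
    have : 0 < (4 * m - ν ^ 2) * (m - 1 / 4) ^ 2 / ((m + 1 / 4) ^ 2 * ν ^ 2) := by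
      positivity
    linarith
  set u : ℝ := Real.sqrt X with hu_def
  have hsX : 1 < u := by
    rw [hu_def, show (1:ℝ) = Real.sqrt 1 by simp]
    exact Real.sqrt_lt_sqrt (by norm_num) hX1
  have hX2 : u ^ 2 = X := Real.sq_sqrt (by linarith)
  set b : ℝ := 1 - Cnu ν κν with hb_def
  have hb_eq : b = ν ^ 2 * (m + 1 / 4) / (m - 1 / 4) ^ 2 * (u - 1) := by
    rw [hb_def, Cnu, ← hm_def, ← hX_def, ← hu_def]; ring
  clear_value b
  have hu : ν ^ 2 * (m + 1 / 4) ^ 2 * u ^ 2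
      = ν ^ 2 * (m + 1 / 4) ^ 2 + (4 * m - ν ^ 2) * (m - 1 / 4) ^ 2 := by
    rw [hX2, hX_def]
    clear_value m
    field_simp
  clear_value m X u
  clear hX_def hu_def hX2 hX1
  have hb_pos : 0 < b := by
    rw [hb_eq]
    apply mul_pos (by positivity)
    linarith
  have hmne : ((m - 1 / 4) ^ 2 : ℝ) ≠ 0 := by positivity
  have hb' : b * (m - 1 / 4) ^ 2 = ν ^ 2 * (m + 1 / 4) * (u - 1) := by
    rw [hb_eq, div_mul_eq_mul_div, div_mul_eq_mul_div]
    exact mul_div_cancel_right₀ _ hmne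
  have hGs : (b ^ 2 * (m - 1/4) ^ 2 + 2 * ν ^ 2 * (m + 1/4) * b
      + ν ^ 2 * ν ^ 2 - 4 * ν ^ 2 * m) * (m - 1/4) ^ 4 = 0 := by
    linear_combination ((b * (m - 1/4) ^ 2 + ν ^ 2 * (m + 1/4) * (u - 1)) * (m - 1/4) ^ 2
      + 2 * ν ^ 2 * (m + 1/4) * (m - 1/4) ^ 2) * hb' + ν ^ 2 * (m - 1/4) ^ 2 * hu
  have hG : b ^ 2 * (m - 1/4) ^ 2 + 2 * ν ^ 2 * (m + 1/4) * b
      + ν ^ 2 * ν ^ 2 - 4 * ν ^ 2 * m = 0 := by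
    have h4 : (m - 1/4) ^ 4 ≠ 0 := by positivity
    exact (mul_eq_zero.mp hGs).resolve_right h4
  clear hGs hb' hu hb_eq hsX
  -- b < 1
  have key1 : (1 - b) * ((1 + b) * (m - 1/4) ^ 2 + 2 * ν ^ 2 * (m + 1/4))
      = (m - 1/4 - ν ^ 2) ^ 2 := by linear_combination -hG
  have hF : 0 < (1 + b) * (m - 1/4) ^ 2 + 2 * ν ^ 2 * (m + 1/4) := by positivity
  have hsq : 0 < (m - 1/4 - ν ^ 2) ^ 2 := pow_pos (by linarith) 2
  have hb1 : b < 1 := by nlinarith [key1, hF, hsq]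
  -- ν² + b/4 ≤ b m
  have key2 : (b * (m - 1/4) - ν ^ 2) *
      ((b * (m - 1/4) + ν ^ 2) * (m - 1/4) + 2 * ν ^ 2 * (m + 1/4))
      = 4 * ν ^ 2 * m * (m - 1/4 - ν ^ 2) := by linear_combination (m - 1/4) * hG
  have hx2 : 0 < b * (m - 1/4) + ν ^ 2 := by linarith [mul_pos hb_pos hm2]
  have hF2 : 0 < (b * (m - 1/4) + ν ^ 2) * (m - 1/4) + 2 * ν ^ 2 * (m + 1/4) := by
    nlinarith [mul_pos hx2 hm2, mul_pos hν2 hm3]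
  have hrhs2 : 0 < 4 * ν ^ 2 * m * (m - 1/4 - ν ^ 2) := by
    have h0 : (0:ℝ) < m - 1/4 - ν ^ 2 := by linarith
    nlinarith [mul_pos (mul_pos hν2 hm0) h0]
  have hbm : ν ^ 2 + b / 4 ≤ b * m := by nlinarith [key2, hF2, hrhs2]
  refine ⟨by linarith, ?_⟩
  intro κ s hκ
  have hk2 : m ≤ κ ^ 2 := by
    have h1 : κν ≤ |κ| := hκ
    have h2 := pow_le_pow_left₀ hκν_pos.le h1 2
    rw [sq_abs] at h2
    rw [hm_def]; exact h2
  set t : ℝ := κ ^ 2 + s ^ 2 with ht_def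
  have ht : m ≤ t := by rw [ht_def]; nlinarith [sq_nonneg s]
  clear_value t
  have hP : (0:ℝ) < ν ^ 2 + b / 4 := by linarith
  have hPt : ν ^ 2 + b / 4 ≤ b * t := by
    linarith [mul_le_mul_of_nonneg_left ht hb_pos.le]
  have h2 : (ν ^ 2 + b / 4) ^ 2 ≤ (b * m) * (b * t) := by
    rw [pow_two]
    exact mul_le_mul hbm hPt hP.le (mul_nonneg hb_pos.le (by linarith))
  have hid : m * ((ν ^ 2 + b/4 + b*t) ^ 2 - (4 * ν ^ 2 + b ^ 2) * t)
      = (t - m) * (b ^ 2 * m * t - (ν ^ 2 + b/4) ^ 2)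
        + t * (b ^ 2 * (m - 1/4) ^ 2 + 2 * ν ^ 2 * (m + 1/4) * b
          + ν ^ 2 * ν ^ 2 - 4 * ν ^ 2 * m) := by ring
  have h6 : 0 ≤ m * ((ν ^ 2 + b/4 + b*t) ^ 2 - (4 * ν ^ 2 + b ^ 2) * t) := by
    rw [hid, hG]
    have h7 : 0 ≤ (t - m) * (b ^ 2 * m * t - (ν ^ 2 + b/4) ^ 2) := by
      apply mul_nonneg (by linarith)
      nlinarith [h2]
    linarith
  have hg : 0 ≤ (ν ^ 2 + b/4 + b*t) ^ 2 - (4 * ν ^ 2 + b ^ 2) * t := by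
    by_contra h
    push_neg at h
    nlinarith [h6, hm0]
  have hA : 0 ≤ ν ^ 2 + b / 4 + κ ^ 2 * b + s ^ 2 * b := by positivity
  have hidR : (ν ^ 2 + b / 4 + κ ^ 2 * b + s ^ 2 * b) ^ 2
      = ((ν ^ 2 + b/4 + b*t) ^ 2 - (4 * ν ^ 2 + b ^ 2) * t)
        + (4 * κ ^ 2 * ν ^ 2 + 4 * ν ^ 2 * s ^ 2 + κ ^ 2 * b ^ 2) + b ^ 2 * s ^ 2 := by
    rw [ht_def]; ring
  have hR : 4 * κ ^ 2 * ν ^ 2 + 4 * ν ^ 2 * s ^ 2 + κ ^ 2 * b ^ 2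
      ≤ (ν ^ 2 + b / 4 + κ ^ 2 * b + s ^ 2 * b) ^ 2 := by
    linarith [hg, mul_nonneg (sq_nonneg b) (sq_nonneg s), hidR]
  have hs := Real.sqrt_le_sqrt hR
  rw [Real.sqrt_sq hA] at hs
  linarith
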